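/- Let ψ : G → G be a commutator-central endomorphism of a group G and let α ∈ 𝓔. Write g ∘ h := g ∘_{ψ,α} h, and for x ∈ G write S(x) := ψ_α(x)⁻¹ · x⁻¹ · ψ_α(x) (the inverse of x in (G, ∘)). Define R : G × G → G × G by R(g,h) = (g⁻¹·(g ∘ h), S(g⁻¹·(g ∘ h)) ∘ g ∘ h). Then R satisfies the set-theoretic Yang–Baxter (braid) equation: (R × id) ∘ (id × R) ∘ (R × id) = (id × R) ∘ (R × id) ∘ (id × R) as maps G × G × G → G × G × G, where R × id applies R to the first two coordinates and id × R applies R to the last two coordinates. -/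

import Mathlib

/-- Evaluation of an element of the free group `𝓔 = FreeGroup (Monoid.End G)`
at an element `g : G`: the image of `α` under the homomorphism `𝓔 → G`
given by `FreeGroup.lift (fun φ => φ g)`. -/
def evalE {G : Type*} [Group G] (α : FreeGroup (Monoid.End G)) (g : G) : G :=
  FreeGroup.lift (fun φ : Monoid.End G => φ g) α

/-- The binary operation `g ∘_{ψ,α} h = g · ψ_α(g) · h · ψ_α(g)⁻¹`, where
`ψ_α(g) = ψ (α(g))`. -/
def op {G : Type*} [Group G] (ψ : Monoid.End G) (α : FreeGroup (Monoid.End G)) (g h : G) : G :=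
  g * ψ (evalE α g) * h * (ψ (evalE α g))⁻¹

/-- The `∘_{ψ,α}`-inverse of `x`, namely `ψ_α(x)⁻¹ · x⁻¹ · ψ_α(x)`. -/
def opInv {G : Type*} [Group G] (ψ : Monoid.End G) (α : FreeGroup (Monoid.End G)) (x : G) : G :=
  (ψ (evalE α x))⁻¹ * x⁻¹ * ψ (evalE α x)

/-- The Yang–Baxter map `R(g,h) = (g⁻¹·(g∘h), S(g⁻¹·(g∘h)) ∘ g ∘ h)` associated to
the brace `(G, ·, ∘_{ψ,α})`, where `S` is the `∘`-inverse. -/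
def ybR {G : Type*} [Group G] (ψ : Monoid.End G) (α : FreeGroup (Monoid.End G))
    (p : G × G) : G × G :=
  (p.1⁻¹ * op ψ α p.1 p.2,
    op ψ α (opInv ψ α (p.1⁻¹ * op ψ α p.1 p.2)) (op ψ α p.1 p.2))

open scoped commutatorElement

namespace YBaux

variable {G : Type*} [Group G] (ψ : Monoid.End G) (α : FreeGroup (Monoid.End G))

/-- conjugation by `ψ (evalE α g)` -/
def lam (g h : G) : G := ψ (evalE α g) * h * (ψ (evalE α g))⁻¹

local notation "π" => QuotientGroup.mk' (Subgroup.center G)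

lemma hcomm (hψ : ∀ g h : G, ψ ⁅g, h⁆ ∈ Subgroup.center G) (a b : G) :
    Commute (π (ψ a)) (π (ψ b)) := by
  have h1 : π (ψ ⁅a, b⁆) = 1 := (QuotientGroup.eq_one_iff _).mpr (hψ a b)
  have h2 : ψ (a * b) = ψ ⁅a, b⁆ * ψ (b * a) := by
    rw [← map_mul]; congr 1; group
  have h3 : π (ψ (a * b)) = π (ψ (b * a)) := by
    rw [h2, map_mul, h1, one_mul]
  unfold Commute SemiconjBy
  calc π (ψ a) * π (ψ b) = π (ψ (a * b)) := by rw [map_mul, map_mul]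
    _ = π (ψ (b * a)) := h3
    _ = π (ψ b) * π (ψ a) := by rw [map_mul, map_mul]

lemma evalE_of (φ : Monoid.End G) (g : G) : evalE (FreeGroup.of φ) g = φ g := by
  simp [evalE]

lemma pure_eq (φ : Monoid.End G) : (pure φ : FreeGroup (Monoid.End G)) = FreeGroup.of φ := rfl

lemma evalE_one' (g : G) : evalE (1 : FreeGroup (Monoid.End G)) g = 1 := by
  simp [evalE]

lemma evalE_mulE (β γ : FreeGroup (Monoid.End G)) (g : G) :
    evalE (β * γ) g = evalE β g * evalE γ g := by
  simp [evalE]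

lemma evalE_invE (β : FreeGroup (Monoid.End G)) (g : G) :
    evalE β⁻¹ g = (evalE β g)⁻¹ := by
  simp [evalE]

lemma evalE_one : evalE α (1 : G) = 1 := by
  have h1 : FreeGroup.lift (fun φ : Monoid.End G => (φ : Monoid.End G) (1 : G)) =
      (1 : FreeGroup (Monoid.End G) →* G) := by
    apply FreeGroup.ext_hom
    intro a
    simp
  show FreeGroup.lift (fun φ : Monoid.End G => (φ : Monoid.End G) (1 : G)) α = 1
  rw [h1]; rfl

lemma evalE_mul (hψ : ∀ g h : G, ψ ⁅g, h⁆ ∈ Subgroup.center G) (x y : G) :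
    π (ψ (evalE α (x * y))) = π (ψ (evalE α x)) * π (ψ (evalE α y)) := by
  induction α using FreeGroup.induction_on with
  | C1 => simp [evalE_one']
  | of φ => simp only [pure_eq, evalE_of, map_mul]
  | inv_of φ _ =>
      have hc := hcomm ψ hψ (φ x) (φ y)
      simp only [pure_eq, evalE_invE, evalE_of, map_mul, map_inv, mul_inv_rev]
      exact (hc.inv_inv).eq.symm
  | mul β γ ih1 ih2 =>
      have hc := hcomm ψ hψ (evalE γ x) (evalE β y)
      simp only [evalE_mulE, map_mul, ih1, ih2]
      rw [hc.mul_mul_mul_comm]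

lemma center_conj {x y : G} (h : π x = π y) (t : G) :
    x * t * x⁻¹ = y * t * y⁻¹ := by
  obtain ⟨z, hz, rfl⟩ := (QuotientGroup.mk'_eq_mk' (N := Subgroup.center G)).mp h
  have hzt : t * z = z * t := Subgroup.mem_center_iff.mp hz t
  rw [mul_inv_rev]
  calc x * t * x⁻¹ = x * (t * z) * z⁻¹ * x⁻¹ := by group
    _ = x * (z * t) * z⁻¹ * x⁻¹ := by rw [hzt]
    _ = x * z * t * (z⁻¹ * x⁻¹) := by group

section
variable (hψ : ∀ g h : G, ψ ⁅g, h⁆ ∈ Subgroup.center G)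
include hψ

lemma lam_mul_left (x y h : G) : lam ψ α (x * y) h = lam ψ α x (lam ψ α y h) := by
  have hpi : π (ψ (evalE α (x * y))) = π (ψ (evalE α x) * ψ (evalE α y)) := by
    rw [map_mul]; exact evalE_mul ψ α hψ x y
  have := center_conj hpi h
  unfold lam
  rw [this]; group

lemma lam_swap (x y h : G) : lam ψ α x (lam ψ α y h) = lam ψ α y (lam ψ α x h) := by
  have hpi : π (ψ (evalE α x) * ψ (evalE α y)) = π (ψ (evalE α y) * ψ (evalE α x)) := by
    rw [map_mul, map_mul, (hcomm ψ hψ _ _).eq]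
  have := center_conj hpi h
  unfold lam at *
  calc ψ (evalE α x) * (ψ (evalE α y) * h * (ψ (evalE α y))⁻¹) * (ψ (evalE α x))⁻¹
      = (ψ (evalE α x) * ψ (evalE α y)) * h * (ψ (evalE α x) * ψ (evalE α y))⁻¹ := by group
    _ = (ψ (evalE α y) * ψ (evalE α x)) * h * (ψ (evalE α y) * ψ (evalE α x))⁻¹ := this
    _ = ψ (evalE α y) * (ψ (evalE α x) * h * (ψ (evalE α x))⁻¹) * (ψ (evalE α y))⁻¹ := by group

end

lemma lam_eq (x y : G) : lam ψ α x y = ψ (evalE α x) * y * (ψ (evalE α x))⁻¹ := rfl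

lemma lam_one_left (h : G) : lam ψ α 1 h = h := by
  unfold lam; rw [evalE_one, map_one]; group

lemma lam_one_right (x : G) : lam ψ α x 1 = 1 := by unfold lam; group

lemma lam_mul_right (x h k : G) : lam ψ α x (h * k) = lam ψ α x h * lam ψ α x k := by
  unfold lam; group

section
variable (hψ : ∀ g h : G, ψ ⁅g, h⁆ ∈ Subgroup.center G)
include hψ

lemma lam_cancel (x h : G) : lam ψ α x (lam ψ α x⁻¹ h) = h := by
  rw [← lam_mul_left ψ α hψ, mul_inv_cancel, lam_one_left]

lemma lam_cancel' (x h : G) : lam ψ α x⁻¹ (lam ψ α x h) = h := by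
  rw [← lam_mul_left ψ α hψ, inv_mul_cancel, lam_one_left]

lemma lam_conj (t y h : G) : lam ψ α (t * y * t⁻¹) h = lam ψ α y h := by
  rw [lam_mul_left ψ α hψ, lam_mul_left ψ α hψ, lam_swap ψ α hψ t y,
    lam_cancel ψ α hψ]

lemma lam_lam (x y h : G) : lam ψ α (lam ψ α x y) h = lam ψ α y h := by
  rw [lam_eq ψ α x y]; exact lam_conj ψ α hψ _ y h

lemma lam_inj (x : G) : Function.Injective (lam ψ α x) := by
  intro u v huv
  have h2 := congrArg (lam ψ α x⁻¹) huv
  rwa [lam_cancel' ψ α hψ, lam_cancel' ψ α hψ] at h2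

lemma lam_inv_congr {x y : G} (H : ∀ h, lam ψ α x h = lam ψ α y h) (h : G) :
    lam ψ α x⁻¹ h = lam ψ α y⁻¹ h := by
  conv_lhs => rw [← lam_cancel ψ α hψ y h, ← H]
  rw [lam_cancel' ψ α hψ]

end

lemma op_eq (g h : G) : op ψ α g h = g * lam ψ α g h := by unfold op lam; group

section
variable (hψ : ∀ g h : G, ψ ⁅g, h⁆ ∈ Subgroup.center G)
include hψ

lemma lam_op (g h k : G) : lam ψ α (op ψ α g h) k = lam ψ α g (lam ψ α h k) := by
  rw [op_eq, lam_mul_left ψ α hψ, lam_lam ψ α hψ]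

end

lemma one_op (h : G) : op ψ α 1 h = h := by rw [op_eq, lam_one_left, one_mul]

lemma op_one (g : G) : op ψ α g 1 = g := by rw [op_eq, lam_one_right, mul_one]

lemma op_opInv (x : G) : op ψ α x (opInv ψ α x) = 1 := by unfold op opInv; group

lemma lam_opInv_arg (x : G) : opInv ψ α x =
    (ψ (evalE α x))⁻¹ * x⁻¹ * ((ψ (evalE α x))⁻¹)⁻¹ := by unfold opInv; group

section
variable (hψ : ∀ g h : G, ψ ⁅g, h⁆ ∈ Subgroup.center G)
include hψ

lemma lam_opInv_left (x h : G) : lam ψ α (opInv ψ α x) h = lam ψ α x⁻¹ h := by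
  rw [lam_opInv_arg, lam_conj ψ α hψ]

lemma opInv_op (x : G) : op ψ α (opInv ψ α x) x = 1 := by
  apply lam_inj ψ α hψ x
  rw [op_eq, lam_mul_right, lam_opInv_left ψ α hψ, lam_cancel ψ α hψ,
    lam_one_right]
  show lam ψ α x (opInv ψ α x) * x = 1
  have : lam ψ α x (opInv ψ α x) = x⁻¹ := by unfold lam opInv; group
  rw [this, inv_mul_cancel]

lemma op_assoc (g h k : G) : op ψ α (op ψ α g h) k = op ψ α g (op ψ α h k) := by
  rw [op_eq ψ α (op ψ α g h) k, lam_op ψ α hψ, op_eq ψ α g h,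
    op_eq ψ α g (op ψ α h k), op_eq ψ α h k, lam_mul_right, mul_assoc]

lemma op_cancel_left (x y : G) : op ψ α x (op ψ α (opInv ψ α x) y) = y := by
  rw [← op_assoc ψ α hψ, op_opInv, one_op]

lemma op_cancel_left' (x y : G) : op ψ α (opInv ψ α x) (op ψ α x y) = y := by
  rw [← op_assoc ψ α hψ, opInv_op ψ α hψ, one_op]

lemma op_left_cancel {a b c : G} (h : op ψ α a b = op ψ α a c) : b = c := by
  rw [op_eq, op_eq] at h
  exact lam_inj ψ α hψ a (mul_left_cancel h)

lemma opInv_op_rev (a b : G) :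
    opInv ψ α (op ψ α a b) = op ψ α (opInv ψ α b) (opInv ψ α a) := by
  apply op_left_cancel ψ α hψ (a := op ψ α a b)
  rw [op_opInv, op_assoc ψ α hψ, op_cancel_left ψ α hψ, op_opInv]

lemma opInv_opInv (x : G) : opInv ψ α (opInv ψ α x) = x := by
  apply op_left_cancel ψ α hψ (a := opInv ψ α x)
  rw [op_opInv, opInv_op ψ α hψ]

lemma lam_op_right (x g h : G) :
    lam ψ α x (op ψ α g h) = op ψ α (lam ψ α x g) (lam ψ α x h) := by
  rw [op_eq ψ α g h, lam_mul_right, op_eq, lam_lam ψ α hψ, lam_swap ψ α hψ]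

lemma lam_opInv_right (x g : G) :
    lam ψ α x (opInv ψ α g) = opInv ψ α (lam ψ α x g) := by
  apply op_left_cancel ψ α hψ (a := lam ψ α x g)
  rw [← lam_op_right ψ α hψ, op_opInv, op_opInv, lam_one_right]

end

end YBaux


/-- `lam_v`: the lambda map of `S(λ_x y) ∘ (x ∘ y)` equals that of `x`. -/
lemma lam_v {G : Type*} [Group G] (ψ : Monoid.End G) (α : FreeGroup (Monoid.End G))
    (hψ : ∀ g h : G, ψ ⁅g, h⁆ ∈ Subgroup.center G) (x y h : G) :
    YBaux.lam ψ α (op ψ α (opInv ψ α (YBaux.lam ψ α x y)) (op ψ α x y)) h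
      = YBaux.lam ψ α x h := by
  rw [YBaux.lam_op ψ α hψ, YBaux.lam_op ψ α hψ, YBaux.lam_opInv_left ψ α hψ,
    YBaux.lam_inv_congr ψ α hψ (YBaux.lam_lam ψ α hψ x y),
    YBaux.lam_swap ψ α hψ, YBaux.lam_cancel' ψ α hψ]

/-- the map `R` satisfies the set-theoretic Yang–Baxter (braid)
equation `(R×id) ∘ (id×R) ∘ (R×id) = (id×R) ∘ (R×id) ∘ (id×R)` on `G × G × G`. -/
theorem yang_baxter {G : Type*} [Group G]
    (ψ : Monoid.End G) (hψ : ∀ g h : G, ψ ⁅g, h⁆ ∈ Subgroup.center G)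
    (α : FreeGroup (Monoid.End G)) :
    (fun p : G × G × G => ((ybR ψ α (p.1, p.2.1)).1, (ybR ψ α (p.1, p.2.1)).2, p.2.2)) ∘
        (fun p : G × G × G => (p.1, ybR ψ α p.2)) ∘
        (fun p : G × G × G => ((ybR ψ α (p.1, p.2.1)).1, (ybR ψ α (p.1, p.2.1)).2, p.2.2)) =
      (fun p : G × G × G => (p.1, ybR ψ α p.2)) ∘
        (fun p : G × G × G => ((ybR ψ α (p.1, p.2.1)).1, (ybR ψ α (p.1, p.2.1)).2, p.2.2)) ∘
        (fun p : G × G × G => (p.1, ybR ψ α p.2)) := by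

  have hfst : ∀ g h : G, g⁻¹ * op ψ α g h = YBaux.lam ψ α g h := by
    intro g h; rw [YBaux.op_eq]; group
  funext p
  obtain ⟨a, b, c⟩ := p
  simp only [Function.comp_apply, ybR, hfst]
  simp only [lam_v ψ α hψ, YBaux.lam_lam ψ α hψ]
  rw [YBaux.lam_swap ψ α hψ b a c]
  simp only [YBaux.lam_op_right ψ α hψ, YBaux.lam_opInv_right ψ α hψ]
  simp only [YBaux.opInv_op_rev ψ α hψ, YBaux.opInv_opInv ψ α hψ,
    YBaux.op_assoc ψ α hψ, YBaux.op_cancel_left ψ α hψ, YBaux.op_cancel_left' ψ α hψ]
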